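/- Define the s-Fibopolynomial binom(n,k)_{F_s(x)} = (F_{sn}(x)·F_{s(n-1)}(x)···F_{s(n-k+1)}(x)) / (F_s(x)·F_{2s}(x)···F_{sk}(x)) for 0 ≤ k ≤ n, with binom(n,0)=binom(n,n)=1. Then for 1 ≤ k ≤ n−1, the recurrence binom(n,k)_{F_s(x)} = F_{s(n-k)+1}(x)·binom(n-1,k-1)_{F_s(x)} + F_{sk-1}(x)·binom(n-1,k)_{F_s(x)} holds. Consequently every s-Fibopolynomial is a polynomial in x. -/

import Mathlib

open scoped Polynomial

/-- Fibonacci polynomials in an arbitrary commutative ring (here used in `RatFunc ℚ`). -/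
def fibGen {R : Type*} [CommRing R] (X : R) : ℕ → R
  | 0 => 0
  | 1 => 1
  | n + 2 => X * fibGen X (n + 1) + fibGen X n

lemma fibGen_map {R S : Type*} [CommRing R] [CommRing S] (f : R →+* S) (x : R) :
    ∀ n, f (fibGen x n) = fibGen (f x) n
  | 0 => by simp [fibGen]
  | 1 => by simp [fibGen]
  | n + 2 => by simp [fibGen, fibGen_map f x (n + 1), fibGen_map f x n]

lemma fibGen_one_rat : ∀ n, fibGen (1 : ℚ) n = (Nat.fib n : ℚ)
  | 0 => by simp [fibGen]
  | 1 => by simp [fibGen]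
  | n + 2 => by
      simp [fibGen, fibGen_one_rat (n + 1), fibGen_one_rat n, Nat.fib_add_two]; ring

lemma fibGen_add {R : Type*} [CommRing R] (x : R) :
    ∀ m n, fibGen x (m + n + 1) =
      fibGen x (m + 1) * fibGen x (n + 1) + fibGen x m * fibGen x n
  | 0, n => by simp [fibGen]
  | 1, n => by
      have e : 1 + n + 1 = n + 2 := by omega
      rw [e]
      show x * fibGen x (n + 1) + fibGen x n = _
      simp [fibGen]
  | m + 2, n => by
      have e : m + 2 + n + 1 = (m + n + 1) + 2 := by omega
      rw [e]
      show x * fibGen x (m + n + 1 + 1) + fibGen x (m + n + 1) = _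
      have e2 : m + n + 1 + 1 = (m + 1) + n + 1 := by omega
      rw [e2, fibGen_add x (m + 1) n, fibGen_add x m n]
      show _ = (x * fibGen x (m + 2) + fibGen x (m + 1)) * fibGen x (n + 1) +
        (x * fibGen x (m + 1) + fibGen x m) * fibGen x n
      ring

lemma fibGen_X_eq (n : ℕ) :
    fibGen (RatFunc.X : RatFunc ℚ) n =
      algebraMap (Polynomial ℚ) (RatFunc ℚ) (fibGen Polynomial.X n) := by
  rw [fibGen_map (algebraMap (Polynomial ℚ) (RatFunc ℚ)) Polynomial.X n, RatFunc.algebraMap_X]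

lemma fibGen_ne_zero {n : ℕ} (hn : 1 ≤ n) : fibGen (RatFunc.X : RatFunc ℚ) n ≠ 0 := by
  rw [fibGen_X_eq]
  intro h
  have h2 : fibGen (Polynomial.X : Polynomial ℚ) n = 0 :=
    RatFunc.algebraMap_injective ℚ (by rw [h, map_zero])
  have h3 := congrArg (Polynomial.eval 1) h2
  rw [show Polynomial.eval 1 (fibGen (Polynomial.X : Polynomial ℚ) n)
      = fibGen (1 : ℚ) n from by
    simpa using fibGen_map (Polynomial.evalRingHom (1:ℚ)) Polynomial.X n] at h3
  rw [fibGen_one_rat] at h3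
  simp at h3
  omega

/-- The `s`-Fibopolynomial `binom(n,k)_{F_s(x)}`, as an element of the field of rational
functions `RatFunc ℚ` (with `x = RatFunc.X`). -/
noncomputable def sFibo (s n k : ℕ) : RatFunc ℚ :=
  (∏ i ∈ Finset.range k, fibGen RatFunc.X (s * (n - i))) /
    (∏ i ∈ Finset.range k, fibGen RatFunc.X (s * (i + 1)))

lemma den_ne_zero (s k : ℕ) (hs : 1 ≤ s) :
    (∏ i ∈ Finset.range k, fibGen (RatFunc.X : RatFunc ℚ) (s * (i + 1))) ≠ 0 :=
  Finset.prod_ne_zero_iff.2 fun i _ =>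
    fibGen_ne_zero (Nat.one_le_iff_ne_zero.2 (by positivity))

lemma sFibo_zero (s n : ℕ) : sFibo s n 0 = 1 := by simp [sFibo]

lemma sFibo_self (s n : ℕ) (hs : 1 ≤ s) : sFibo s n n = 1 := by
  unfold sFibo
  rw [show (∏ i ∈ Finset.range n, fibGen (RatFunc.X : RatFunc ℚ) (s * (n - i)))
      = ∏ i ∈ Finset.range n, fibGen (RatFunc.X : RatFunc ℚ) (s * (i + 1)) from ?_]
  · exact div_self (den_ne_zero s n hs)
  · rw [← Finset.prod_range_reflect (fun j => fibGen (RatFunc.X : RatFunc ℚ) (s * (j + 1))) n]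
    exact Finset.prod_congr rfl fun i hi => by
      rw [Finset.mem_range] at hi
      congr 2
      omega

lemma sFibo_rec (s n k : ℕ) (hs : 1 ≤ s) (hk : 1 ≤ k) (hkn : k + 1 ≤ n) :
    sFibo s n k =
      fibGen RatFunc.X (s * (n - k) + 1) * sFibo s (n - 1) (k - 1) +
        fibGen RatFunc.X (s * k - 1) * sFibo s (n - 1) k := by
  obtain ⟨m, rfl⟩ : ∃ m, k = m + 1 := ⟨k - 1, by omega⟩
  unfold sFibo
  set F : ℕ → RatFunc ℚ := fibGen RatFunc.X with hF
  set A := ∏ i ∈ Finset.range (m + 1), F (s * (n - i)) with hA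
  set A1 := ∏ i ∈ Finset.range m, F (s * (n - 1 - i)) with hA1
  set A2 := ∏ i ∈ Finset.range (m + 1), F (s * (n - 1 - i)) with hA2
  set B1 := ∏ i ∈ Finset.range m, F (s * (i + 1)) with hB1
  set B := ∏ i ∈ Finset.range (m + 1), F (s * (i + 1)) with hB
  have h2 : B = B1 * F (s * (m + 1)) := Finset.prod_range_succ _ _
  have h1 : A = F (s * n) * A1 := by
    rw [hA, Finset.prod_range_succ']
    rw [show (∏ i ∈ Finset.range m, F (s * (n - (i + 1))))
        = A1 from Finset.prod_congr rfl fun i hi => by congr 2; omega]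
    rw [show n - 0 = n from rfl]; ring
  have h3 : A2 * F (s * n) = A * F (s * (n - (m + 1))) := by
    have e1 : (∏ i ∈ Finset.range (m + 2), F (s * (n - i)))
        = A * F (s * (n - (m + 1))) := Finset.prod_range_succ _ _
    have e2 : (∏ i ∈ Finset.range (m + 2), F (s * (n - i)))
        = A2 * F (s * n) := by
      rw [Finset.prod_range_succ']
      rw [show (∏ i ∈ Finset.range (m + 1), F (s * (n - (i + 1))))
          = A2 from Finset.prod_congr rfl fun i hi => by congr 2; omega]
      rw [show n - 0 = n from rfl]
    rw [← e2, e1]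
  have hb : 1 ≤ s * (m + 1) := Nat.one_le_iff_ne_zero.2 (by positivity)
  have h4 : F (s * n) = F (s * (n - (m + 1)) + 1) * F (s * (m + 1)) +
      F (s * (n - (m + 1))) * F (s * (m + 1) - 1) := by
    have e : s * (n - (m + 1)) + (s * (m + 1) - 1) + 1 = s * n := by
      have : s * (n - (m + 1)) + s * (m + 1) = s * n := by
        rw [← Nat.mul_add]; congr 1; omega
      omega
    have := fibGen_add (RatFunc.X : RatFunc ℚ) (s * (n - (m + 1))) (s * (m + 1) - 1)
    rw [e, show s * (m + 1) - 1 + 1 = s * (m + 1) from by omega] at this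
    exact this
  have hsn : F (s * n) ≠ 0 :=
    fibGen_ne_zero (Nat.one_le_iff_ne_zero.2 (Nat.mul_ne_zero (by omega) (by omega)))
  have hFb : F (s * (m + 1)) ≠ 0 := fibGen_ne_zero hb
  have hB1ne : B1 ≠ 0 := den_ne_zero s m hs
  have key : A = F (s * (n - (m + 1)) + 1) * A1 * F (s * (m + 1)) +
      F (s * (m + 1) - 1) * A2 := by
    apply mul_right_cancel₀ hsn
    calc A * F (s * n)
        = F (s * n) * A1 * F (s * n) := by rw [← h1]
      _ = (F (s * (n - (m + 1)) + 1) * F (s * (m + 1)) +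
            F (s * (n - (m + 1))) * F (s * (m + 1) - 1)) * A1 * F (s * n) := by
          rw [← h4]
      _ = F (s * (n - (m + 1)) + 1) * F (s * (m + 1)) * A1 * F (s * n) +
            F (s * (m + 1) - 1) * (A * F (s * (n - (m + 1)))) := by rw [h1]; ring
      _ = F (s * (n - (m + 1)) + 1) * F (s * (m + 1)) * A1 * F (s * n) +
            F (s * (m + 1) - 1) * (A2 * F (s * n)) := by rw [← h3]
      _ = (F (s * (n - (m + 1)) + 1) * A1 * F (s * (m + 1)) +
            F (s * (m + 1) - 1) * A2) * F (s * n) := by ring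
  rw [key, h2]
  simp only [Nat.add_sub_cancel]
  rw [← hA1, ← hB1]
  field_simp

theorem stmt_6 (s : ℕ) (hs : 1 ≤ s) :
    (∀ n k : ℕ, 1 ≤ n → 1 ≤ k → k ≤ n - 1 →
      sFibo s n k =
        fibGen RatFunc.X (s * (n - k) + 1) * sFibo s (n - 1) (k - 1) +
          fibGen RatFunc.X (s * k - 1) * sFibo s (n - 1) k) ∧
    (∀ n k : ℕ, k ≤ n → ∃ p : Polynomial ℚ,
      sFibo s n k = algebraMap (Polynomial ℚ) (RatFunc ℚ) p) := by
  constructor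
  · intro n k hn hk hkn
    exact sFibo_rec s n k hs hk (by omega)
  · intro n
    induction n with
    | zero =>
      intro k hk
      interval_cases k
      exact ⟨1, by rw [sFibo_zero, map_one]⟩
    | succ n ih =>
      intro k hk
      rcases Nat.eq_zero_or_pos k with rfl | hk1
      · exact ⟨1, by rw [sFibo_zero, map_one]⟩
      rcases eq_or_lt_of_le hk with rfl | hlt
      · exact ⟨1, by rw [sFibo_self s _ hs, map_one]⟩
      obtain ⟨p1, hp1⟩ := ih (k - 1) (by omega)
      obtain ⟨p2, hp2⟩ := ih k (by omega)
      refine ⟨fibGen Polynomial.X (s * (n + 1 - k) + 1) * p1 +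
        fibGen Polynomial.X (s * k - 1) * p2, ?_⟩
      rw [sFibo_rec s (n + 1) k hs hk1 (by omega),
        show n + 1 - 1 = n from rfl, hp1, hp2, map_add, map_mul, map_mul,
        fibGen_X_eq, fibGen_X_eq]
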